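/- Let A, A', B, B', C ∈ ℂ^{r×r} with C + nI invertible for all integers n ≥ 0, A, A', B pairwise commuting, B'C = CB', and |x| < 1, |y| < 1; let s be a non-negative integer. (i) If A + kI is invertible for all integers k ≥ 0, then F₃(A+sI, A', B, B'; C; x, y) = ∑_{k=0}^{s} (s choose k) (B)_k x^k ·[F₃(A+kI, A', B+kI, B'; C+kI; x, y)]·(C)_k⁻¹. (ii) If A' + kI is invertible for all integers k ≥ 0, then F₃(A, A'+sI, B, B'; C; x, y) = ∑_{k=0}^{s} (s choose k) y^k ·[F₃(A, A'+kI, B, B'+kI; C+kI; x, y)]·(B')_k·(C)_k⁻¹. (iii) If A − kI is invertible for all integers 1 ≤ k ≤ s, then F₃(A−sI, A', B, B'; C; x, y) = ∑_{k=0}^{s} (s choose k) (B)_k (−x)^k ·[F₃(A, A', B+kI, B'; C+kI; x, y)]·(C)_k⁻¹. (iv) If A' − kI is invertible for all integers 1 ≤ k ≤ s, then F₃(A, A'−sI, B, B'; C; x, y) = ∑_{k=0}^{s} (s choose k) (−y)^k ·[F₃(A, A', B, B'+kI; C+kI; x, y)]·(B')_k·(C)_k⁻¹. -/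

import Mathlib

/-- The shifted factorial (Pochhammer) matrix: `(A)_0 = I`, `(A)_{n+1} = (A)_n (A + nI)`. -/
noncomputable def mPoch {r : ℕ} (A : Matrix (Fin r) (Fin r) ℂ) : ℕ → Matrix (Fin r) (Fin r) ℂ
  | 0 => 1
  | n + 1 => mPoch A n * (A + (n : ℂ) • 1)

/-- The third Appell matrix function `F₃(A, A', B, B'; C; x, y)`. -/
noncomputable def appellF3 {r : ℕ} (A A' B B' C : Matrix (Fin r) (Fin r) ℂ) (x y : ℂ) :
    Matrix (Fin r) (Fin r) ℂ :=
  ∑' p : ℕ × ℕ,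
    (((p.1.factorial : ℂ) * (p.2.factorial : ℂ))⁻¹ * x ^ p.1 * y ^ p.2) •
      (mPoch A p.1 * mPoch A' p.2 * mPoch B p.1 * mPoch B' p.2 * (mPoch C (p.1 + p.2))⁻¹)

namespace AF3
open Finset
variable {r : ℕ}

local notation "Mat" => Matrix (Fin r) (Fin r) ℂ

lemma mPoch_zero (A : Mat) : mPoch A 0 = 1 := rfl
lemma mPoch_succ (A : Mat) (n : ℕ) : mPoch A (n+1) = mPoch A n * (A + (n : ℂ) • 1) := rfl

lemma Commute.mPoch' {X A : Mat} (h : Commute X A) (n : ℕ) : Commute X (mPoch A n) := by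
  induction n with
  | zero => exact Commute.one_right X
  | succ n ih => exact ih.mul_right (h.add_right (Commute.smul_right (Commute.one_right X) _))

lemma mPoch_add (A : Mat) (k m : ℕ) :
    mPoch A (k + m) = mPoch A k * mPoch (A + (k : ℂ) • 1) m := by
  induction m with
  | zero => simp [mPoch_zero]
  | succ m ih =>
      rw [← Nat.add_assoc, mPoch_succ, ih, mPoch_succ, mul_assoc]
      congr 2
      push_cast
      rw [add_smul, add_assoc]

/-- falling factorial of a natural number, as a complex scalar -/
noncomputable def dfall (M k : ℕ) : ℂ := ∏ j ∈ range k, ((M : ℂ) - (j : ℂ))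

lemma dfall_zero (M : ℕ) : dfall M 0 = 1 := rfl

lemma dfall_eq_zero {M k : ℕ} (h : M < k) : dfall M k = 0 :=
  Finset.prod_eq_zero (Finset.mem_range.mpr h) (by simp)

lemma dfall_succ' (M k : ℕ) : dfall M (k + 1) = dfall M k * ((M : ℂ) - (k : ℂ)) :=
  Finset.prod_range_succ _ _

lemma dfall_mul_natsub (M k : ℕ) : dfall M k * ((M - k : ℕ) : ℂ) = dfall M (k + 1) := by
  rcases le_or_gt k M with h | h
  · rw [dfall_succ']
    congr 1
    push_cast [h]
    ring
  · rw [dfall_eq_zero h, dfall_eq_zero (h.trans (Nat.lt_succ_self k)), zero_mul]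

lemma dfall_succ_left (M k : ℕ) :
    dfall M (k + 1) = ((M : ℂ)) * dfall (M - 1) k := by
  rcases Nat.eq_zero_or_pos M with hM | hM
  · subst hM
    rw [dfall_eq_zero (Nat.succ_pos k), Nat.cast_zero, zero_mul]
  · obtain ⟨N, rfl⟩ : ∃ N, M = N + 1 := ⟨M - 1, by omega⟩
    rw [Nat.add_sub_cancel]
    unfold dfall
    rw [Finset.prod_range_succ', mul_comm]
    congr 1
    · simp
    · apply Finset.prod_congr rfl
      intro j _
      push_cast
      ring

lemma dfall_fact (m k : ℕ) : dfall (m + k) k * (m.factorial : ℂ) = ((m + k).factorial : ℂ) := by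
  induction k with
  | zero => simp [dfall_zero]
  | succ k ih =>
      have : m + (k+1) = (m + k) + 1 := by ring
      rw [this, dfall_succ_left]
      have h1 : (m + k + 1) - 1 = m + k := by omega
      rw [h1, mul_assoc, ih]
      push_cast [Nat.factorial_succ]
      ring

/-- one-step lemma: `(X+I)_M = (X)_M + M • (X+I)_{M-1}` -/
lemma mPoch_one_step (X : Mat) (M : ℕ) :
    mPoch (X + (1 : ℂ) • 1) M = mPoch X M + ((M : ℂ)) • mPoch (X + (1 : ℂ) • 1) (M - 1) := by
  cases M with
  | zero => simp [mPoch_zero]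
  | succ M =>
      have h1 : mPoch (X + (1:ℂ) • 1) (M + 1)
          = mPoch (X + (1:ℂ) • 1) M * (X + ((M:ℂ) + 1) • 1) := by
        rw [mPoch_succ]
        congr 1
        rw [add_smul]
        abel
      have h2 : mPoch X (M + 1) = X * mPoch (X + (1:ℂ) • 1) M := by
        have h := mPoch_add X 1 M
        rw [Nat.add_comm 1 M, Nat.cast_one] at h
        rw [h]
        congr 1
        simp [mPoch_succ, mPoch_zero]
      have hc : Commute X (mPoch (X + (1:ℂ) • 1) M) :=
        Commute.mPoch' ((Commute.refl X).add_right (Commute.smul_right (Commute.one_right X) _)) M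
      calc mPoch (X + (1:ℂ) • 1) (M + 1)
          = mPoch (X + (1:ℂ) • 1) M * (X + ((M:ℂ) + 1) • 1) := h1
        _ = mPoch (X + (1:ℂ) • 1) M * X + ((M:ℂ) + 1) • mPoch (X + (1:ℂ) • 1) M := by
            rw [mul_add, Matrix.mul_smul, mul_one]
        _ = X * mPoch (X + (1:ℂ) • 1) M + ((M:ℂ) + 1) • mPoch (X + (1:ℂ) • 1) M := by
            rw [hc.eq]
        _ = mPoch X (M + 1) + (((M+1 : ℕ)) : ℂ) • mPoch (X + (1:ℂ) • 1) (M + 1 - 1) := by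
            rw [← h2, Nat.add_sub_cancel]
            push_cast
            rfl

lemma pascal_sum (s : ℕ) (w : ℕ → ℂ) (h : ℕ → Mat) :
    ∑ k ∈ range (s+2), (((s+1).choose k : ℂ) * w k) • h k
      = ∑ k ∈ range (s+2), ((s.choose k : ℂ) * w k) • h k
        + ∑ k ∈ range (s+1), ((s.choose k : ℂ) * w (k+1)) • h (k+1) := by
  rw [Finset.sum_range_succ' (fun k => (((s+1).choose k : ℂ) * w k) • h k),
      Finset.sum_range_succ' (fun k => ((s.choose k : ℂ) * w k) • h k)]
  rw [Nat.choose_zero_right, Nat.choose_zero_right, add_right_comm]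
  congr 1
  rw [← Finset.sum_add_distrib]
  apply Finset.sum_congr rfl
  intro k _
  rw [← add_smul, ← add_mul]
  congr 2
  rw [Nat.choose_succ_succ']
  push_cast
  ring

lemma coeff_plus (s : ℕ) (A : Mat) (M : ℕ) :
    mPoch (A + ((s : ℕ) : ℂ) • 1) M
      = ∑ k ∈ range (s+1), ((s.choose k : ℂ) * dfall M k) •
          mPoch (A + ((k : ℕ) : ℂ) • 1) (M - k) := by
  induction s generalizing A M with
  | zero => simp [dfall_zero]
  | succ s ih =>
      have key : A + (((s+1 : ℕ)) : ℂ) • 1 = (A + (1:ℂ) • 1) + ((s : ℕ) : ℂ) • 1 := by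
        push_cast
        rw [add_smul]
        abel
      rw [key, ih]
      have step : ∀ k, mPoch (A + (1:ℂ) • 1 + ((k:ℕ):ℂ) • 1) (M - k)
          = mPoch (A + ((k:ℕ):ℂ) • 1) (M - k)
            + (((M - k : ℕ)) : ℂ) • mPoch (A + (((k+1:ℕ)):ℂ) • 1) (M - (k+1)) := by
        intro k
        have e1 : A + (1:ℂ) • 1 + ((k:ℕ):ℂ) • 1 = (A + ((k:ℕ):ℂ) • 1) + (1:ℂ) • 1 := by abel
        have e2 : (A + ((k:ℕ):ℂ) • 1) + (1:ℂ) • 1 = A + (((k+1:ℕ)):ℂ) • 1 := by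
          push_cast
          rw [add_smul]
          abel
        rw [e1, mPoch_one_step, e2, Nat.sub_sub]
      have expand : ∑ k ∈ range (s+1), ((s.choose k : ℂ) * dfall M k) •
            mPoch (A + (1:ℂ) • 1 + ((k:ℕ):ℂ) • 1) (M - k)
          = ∑ k ∈ range (s+1), ((s.choose k : ℂ) * dfall M k) •
              mPoch (A + ((k:ℕ):ℂ) • 1) (M - k)
            + ∑ k ∈ range (s+1), ((s.choose k : ℂ) * dfall M (k+1)) •
              mPoch (A + (((k+1:ℕ)):ℂ) • 1) (M - (k+1)) := by
        rw [← Finset.sum_add_distrib]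
        apply Finset.sum_congr rfl
        intro k _
        rw [step k, smul_add, smul_smul]
        congr 2
        rw [mul_assoc, dfall_mul_natsub]
      rw [expand]
      have ext : ∑ k ∈ range (s+2), ((s.choose k : ℂ) * dfall M k) •
            mPoch (A + ((k:ℕ):ℂ) • 1) (M - k)
          = ∑ k ∈ range (s+1), ((s.choose k : ℂ) * dfall M k) •
              mPoch (A + ((k:ℕ):ℂ) • 1) (M - k) := by
        rw [Finset.sum_range_succ, Nat.choose_succ_self]
        simp
      rw [← ext]
      exact (pascal_sum s (fun k => dfall M k)
        (fun k => mPoch (A + ((k:ℕ):ℂ) • 1) (M - k))).symm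

lemma coeff_minus (s : ℕ) (A : Mat) (M : ℕ) :
    mPoch (A - ((s : ℕ) : ℂ) • 1) M
      = ∑ k ∈ range (s+1), ((s.choose k : ℂ) * ((-1 : ℂ)) ^ k * dfall M k) •
          mPoch A (M - k) := by
  induction s generalizing M with
  | zero => simp [dfall_zero]
  | succ s ih =>
      have key : A - ((s : ℕ) : ℂ) • 1 = (A - (((s+1:ℕ)) : ℂ) • 1) + (1:ℂ) • 1 := by
        push_cast
        rw [add_smul]
        abel
      have os := mPoch_one_step (A - (((s+1:ℕ)) : ℂ) • 1) M
      rw [← key] at os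
      have main : mPoch (A - (((s+1:ℕ)) : ℂ) • 1) M
          = mPoch (A - ((s:ℕ):ℂ) • 1) M
            - ((M:ℂ)) • mPoch (A - ((s:ℕ):ℂ) • 1) (M - 1) := by
        rw [os]
        abel
      rw [main, ih, ih]
      have second : ((M:ℂ)) • ∑ k ∈ range (s+1),
            ((s.choose k : ℂ) * ((-1:ℂ)) ^ k * dfall (M-1) k) • mPoch A (M - 1 - k)
          = - ∑ k ∈ range (s+1),
              ((s.choose k : ℂ) * ((-1:ℂ)) ^ (k+1) * dfall M (k+1)) • mPoch A (M - (k+1)) := by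
        rw [Finset.smul_sum, ← Finset.sum_neg_distrib]
        apply Finset.sum_congr rfl
        intro k _
        have hidx : M - 1 - k = M - (k+1) := by omega
        rw [hidx, smul_smul, ← neg_smul]
        congr 1
        rw [dfall_succ_left]
        ring
      rw [second, sub_neg_eq_add]
      have ext : ∑ k ∈ range (s+2), ((s.choose k : ℂ) * ((-1:ℂ)) ^ k * dfall M k) •
            mPoch A (M - k)
          = ∑ k ∈ range (s+1), ((s.choose k : ℂ) * ((-1:ℂ)) ^ k * dfall M k) •
              mPoch A (M - k) := by
        rw [Finset.sum_range_succ, Nat.choose_succ_self]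
        simp
      rw [← ext]
      have P := pascal_sum s (fun k => ((-1:ℂ)) ^ k * dfall M k) (fun k => mPoch A (M - k))
      simp only [← mul_assoc] at P
      exact P.symm

lemma commute_nonsing_inv {X M : Mat} (h : IsUnit M) (hc : X * M = M * X) :
    X * M⁻¹ = M⁻¹ * X := by
  have hd := (Matrix.isUnit_iff_isUnit_det M).mp h
  calc X * M⁻¹ = M⁻¹ * M * (X * M⁻¹) := by rw [Matrix.nonsing_inv_mul M hd, one_mul]
    _ = M⁻¹ * (M * X * M⁻¹) := by simp only [mul_assoc]
    _ = M⁻¹ * (X * M * M⁻¹) := by rw [hc]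
    _ = M⁻¹ * X * (M * M⁻¹) := by simp only [mul_assoc]
    _ = M⁻¹ * X := by rw [Matrix.mul_nonsing_inv M hd, mul_one]

lemma add_smul_add (C : Mat) (m0 N : ℕ) :
    C + ((m0 : ℕ) : ℂ) • 1 + ((N : ℕ) : ℂ) • 1 = C + (((m0 + N : ℕ)) : ℂ) • 1 := by
  push_cast
  rw [add_smul]
  abel

lemma isUnit_mPoch_shift {C : Mat} (hC : ∀ n : ℕ, IsUnit (C + (n : ℂ) • 1))
    (m0 N : ℕ) : IsUnit (mPoch (C + ((m0 : ℕ) : ℂ) • 1) N) := by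
  induction N with
  | zero => exact isUnit_one
  | succ N ih =>
      rw [mPoch_succ, add_smul_add]
      exact ih.mul (hC (m0 + N))

/-- real Pochhammer majorant -/
noncomputable def pr (a : ℝ) (m : ℕ) : ℝ := ∏ j ∈ range m, (a + j)

lemma pr_zero (a : ℝ) : pr a 0 = 1 := rfl
lemma pr_succ (a : ℝ) (m : ℕ) : pr a (m+1) = pr a m * (a + m) := Finset.prod_range_succ _ _

lemma pr_pos {a : ℝ} (ha : 0 < a) (m : ℕ) : 0 < pr a m :=
  Finset.prod_pos fun j _ => by positivity

lemma pr_nonneg {a : ℝ} (ha : 0 < a) (m : ℕ) : 0 ≤ pr a m := (pr_pos ha m).le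

lemma pr_le_pr {a : ℝ} (ha : 1 ≤ a) {m m' : ℕ} (h : m ≤ m') : pr a m ≤ pr a m' := by
  obtain ⟨d, rfl⟩ := Nat.exists_eq_add_of_le h
  clear h
  induction d with
  | zero => exact le_refl _
  | succ d ih =>
      have : m + (d + 1) = (m + d) + 1 := by omega
      rw [this, pr_succ]
      have h1 : (1:ℝ) ≤ a + ((m+d : ℕ) : ℝ) := by
        have : (0:ℝ) ≤ ((m+d : ℕ) : ℝ) := Nat.cast_nonneg _
        linarith
      calc pr a m ≤ pr a (m+d) := ih
        _ ≤ pr a (m+d) * (a + ((m+d:ℕ):ℝ)) :=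
            le_mul_of_one_le_right (pr_nonneg (by linarith) _) h1

lemma pr_mono {a a' : ℝ} (ha : 0 < a) (h : a ≤ a') (m : ℕ) : pr a m ≤ pr a' m :=
  Finset.prod_le_prod (fun j _ => by positivity) (fun j _ => by
    have : (0:ℝ) ≤ (j:ℝ) := Nat.cast_nonneg _
    linarith)

/-- the general term of the F₃ series -/
noncomputable def term (A A' B B' C : Mat) (x y : ℂ) (p : ℕ × ℕ) : Mat :=
  (((p.1.factorial : ℂ) * (p.2.factorial : ℂ))⁻¹ * x ^ p.1 * y ^ p.2) •
    (mPoch A p.1 * mPoch A' p.2 * mPoch B p.1 * mPoch B' p.2 * (mPoch C (p.1 + p.2))⁻¹)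

/-- the k-th slice family for slot-1 recursions -/
noncomputable def V1 (D A' B B' C : Mat) (x y : ℂ) (e : ℂ) (k : ℕ) (p : ℕ × ℕ) : Mat :=
  (e * dfall p.1 k * ((p.1.factorial : ℂ) * (p.2.factorial : ℂ))⁻¹ * x ^ p.1 * y ^ p.2) •
    (mPoch D (p.1 - k) * mPoch A' p.2 * mPoch B p.1 * mPoch B' p.2 * (mPoch C (p.1 + p.2))⁻¹)

/-- the k-th slice family for slot-2 recursions -/
noncomputable def V2 (A D' B B' C : Mat) (x y : ℂ) (e : ℂ) (k : ℕ) (p : ℕ × ℕ) : Mat :=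
  (e * dfall p.2 k * ((p.1.factorial : ℂ) * (p.2.factorial : ℂ))⁻¹ * x ^ p.1 * y ^ p.2) •
    (mPoch A p.1 * mPoch D' (p.2 - k) * mPoch B p.1 * mPoch B' p.2 * (mPoch C (p.1 + p.2))⁻¹)

lemma dfall_abs (M k : ℕ) : ‖dfall M k‖ ≤ ((M:ℝ)+1)^k := by
  rcases lt_or_ge M k with h | h
  · rw [dfall_eq_zero h, norm_zero]
    positivity
  · rw [dfall, norm_prod]
    have : ((M:ℝ)+1)^k = ∏ _j ∈ range k, ((M:ℝ)+1) := by
      rw [Finset.prod_const, Finset.card_range]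
    rw [this]
    apply Finset.prod_le_prod (fun j _ => norm_nonneg _)
    intro j hj
    have hjM : j ≤ M := le_trans (Nat.le_of_lt_succ (Nat.lt_succ_of_lt (Finset.mem_range.mp hj))) h
    have : ((M:ℂ) - (j:ℂ)) = (((M - j : ℕ)) : ℂ) := by
      push_cast [Nat.cast_sub hjM]
      ring
    rw [this, Complex.norm_natCast]
    have : ((M - j : ℕ) : ℝ) ≤ (M:ℝ) := by
      exact_mod_cast Nat.cast_le.mpr (Nat.sub_le M j)
    linarith

lemma commute_mPoch_mPoch {X Y : Mat} (h : Commute X Y) (m n : ℕ) :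
    Commute (mPoch X m) (mPoch Y n) :=
  (Commute.mPoch' (Commute.mPoch' h n).symm m).symm

lemma V1_zero (D A' B B' C : Mat) (x y : ℂ) (e : ℂ) (k : ℕ) (p : ℕ × ℕ) (h : p.1 < k) :
    V1 D A' B B' C x y e k p = 0 := by
  rw [V1, dfall_eq_zero h]
  simp

lemma V2_zero (A D' B B' C : Mat) (x y : ℂ) (e : ℂ) (k : ℕ) (p : ℕ × ℕ) (h : p.2 < k) :
    V2 A D' B B' C x y e k p = 0 := by
  rw [V2, dfall_eq_zero h]
  simp

lemma term_expand1 (P A' B B' C : Mat) (x y : ℂ) (D : ℕ → Mat) (e : ℕ → ℂ) (s : ℕ)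
    (hcoef : ∀ M, mPoch P M = ∑ k ∈ range (s+1), (e k * dfall M k) • mPoch (D k) (M - k))
    (p : ℕ × ℕ) :
    term P A' B B' C x y p = ∑ k ∈ range (s+1), V1 (D k) A' B B' C x y (e k) k p := by
  rw [term, hcoef p.1, Finset.sum_mul, Finset.sum_mul, Finset.sum_mul, Finset.sum_mul,
    Finset.smul_sum]
  apply Finset.sum_congr rfl
  intro k _
  rw [V1, smul_mul_assoc, smul_mul_assoc, smul_mul_assoc, smul_mul_assoc, smul_smul]
  congr 1
  ring

lemma term_expand2 (A P' B B' C : Mat) (x y : ℂ) (D' : ℕ → Mat) (e : ℕ → ℂ) (s : ℕ)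
    (hcoef : ∀ M, mPoch P' M = ∑ k ∈ range (s+1), (e k * dfall M k) • mPoch (D' k) (M - k))
    (p : ℕ × ℕ) :
    term A P' B B' C x y p = ∑ k ∈ range (s+1), V2 A (D' k) B B' C x y (e k) k p := by
  rw [term, hcoef p.2, Finset.mul_sum, Finset.sum_mul, Finset.sum_mul, Finset.sum_mul,
    Finset.smul_sum]
  apply Finset.sum_congr rfl
  intro k _
  rw [V2, mul_smul_comm, smul_mul_assoc, smul_mul_assoc, smul_mul_assoc, smul_smul]
  congr 1
  ring

lemma dfall_ne_zero (m k : ℕ) : dfall (m + k) k ≠ 0 := by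
  intro h
  have := dfall_fact m k
  rw [h, zero_mul] at this
  exact (Nat.cast_ne_zero.mpr (Nat.factorial_ne_zero (m+k))) this.symm

lemma scalar_shift1 (e x y : ℂ) (k m n : ℕ) :
    e * dfall (m+k) k * (((m+k).factorial : ℂ) * (n.factorial : ℂ))⁻¹ * x ^ (m+k) * y ^ n
      = (e * x^k) * (((m.factorial : ℂ) * (n.factorial : ℂ))⁻¹ * x ^ m * y ^ n) := by
  have hm : ((m+k).factorial : ℂ) = dfall (m+k) k * (m.factorial : ℂ) := (dfall_fact m k).symm
  rw [hm, pow_add]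
  have h1 : (m.factorial : ℂ) ≠ 0 := Nat.cast_ne_zero.mpr (Nat.factorial_ne_zero m)
  have h2 : (n.factorial : ℂ) ≠ 0 := Nat.cast_ne_zero.mpr (Nat.factorial_ne_zero n)
  have h3 := dfall_ne_zero m k
  field_simp

lemma scalar_shift2 (e x y : ℂ) (k m n : ℕ) :
    e * dfall (n+k) k * ((m.factorial : ℂ) * ((n+k).factorial : ℂ))⁻¹ * x ^ m * y ^ (n+k)
      = (e * y^k) * (((m.factorial : ℂ) * (n.factorial : ℂ))⁻¹ * x ^ m * y ^ n) := by
  have hm : ((n+k).factorial : ℂ) = dfall (n+k) k * (n.factorial : ℂ) := (dfall_fact n k).symm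
  rw [hm, pow_add]
  have h1 : (m.factorial : ℂ) ≠ 0 := Nat.cast_ne_zero.mpr (Nat.factorial_ne_zero m)
  have h2 : (n.factorial : ℂ) ≠ 0 := Nat.cast_ne_zero.mpr (Nat.factorial_ne_zero n)
  have h3 := dfall_ne_zero n k
  field_simp

lemma V1_shift (D A' B B' C : Mat) (x y : ℂ) (e : ℂ) (k : ℕ)
    (hDB : Commute (D) B) (hA'B : Commute A' B) (m n : ℕ) :
    V1 D A' B B' C x y e k (m + k, n)
      = (e * x^k) • (mPoch B k *
          term D A' (B + (k:ℂ) • 1) B' (C + (k:ℂ) • 1) x y (m, n) * (mPoch C k)⁻¹) := by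
  have hB : mPoch B (m+k) = mPoch B k * mPoch (B + (k:ℂ) • 1) m := by
    rw [Nat.add_comm m k]
    exact mPoch_add B k m
  have hCinv : (mPoch C ((m+k)+n))⁻¹ = (mPoch (C + (k:ℂ) • 1) (m+n))⁻¹ * (mPoch C k)⁻¹ := by
    have h : (m+k)+n = k + (m+n) := by omega
    rw [h, mPoch_add C k (m+n), Matrix.mul_inv_rev]
  have c1 : Commute (mPoch B k) (mPoch D m) := commute_mPoch_mPoch hDB.symm k m
  have c2 : Commute (mPoch B k) (mPoch A' n) := commute_mPoch_mPoch hA'B.symm k n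
  have hmat : mPoch B k * (mPoch D m * mPoch A' n * mPoch (B + (k:ℂ) • 1) m * mPoch B' n *
        (mPoch (C + (k:ℂ) • 1) (m+n))⁻¹) * (mPoch C k)⁻¹
      = mPoch D m * mPoch A' n * mPoch B (m+k) * mPoch B' n * (mPoch C ((m+k)+n))⁻¹ := by
    rw [hB, hCinv]
    simp only [mul_assoc]
    rw [← mul_assoc (mPoch B k) (mPoch D m), c1.eq, mul_assoc]
    rw [← mul_assoc (mPoch B k) (mPoch A' n), c2.eq, mul_assoc]
  show (e * dfall (m+k) k * (((m+k).factorial : ℂ) * (n.factorial : ℂ))⁻¹ * x ^ (m+k) * y ^ n) •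
      (mPoch D ((m+k) - k) * mPoch A' n * mPoch B (m+k) * mPoch B' n *
        (mPoch C ((m+k)+n))⁻¹) = _
  rw [term, Matrix.mul_smul, Matrix.smul_mul, smul_smul, Nat.add_sub_cancel]
  rw [scalar_shift1]
  congr 1
  exact hmat.symm

set_option maxHeartbeats 1000000 in
lemma V2_shift {C : Mat} (hC : ∀ n : ℕ, IsUnit (C + (n : ℂ) • 1))
    (A D' B B' : Mat) (x y : ℂ) (e : ℂ) (k : ℕ)
    (hB'C : Commute B' C) (m n : ℕ) :
    V2 A D' B B' C x y e k (m, n + k)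
      = (e * y^k) • (term A D' B (B' + (k:ℂ) • 1) (C + (k:ℂ) • 1) x y (m, n) *
          mPoch B' k * (mPoch C k)⁻¹) := by
  have hB : mPoch B' (n+k) = mPoch B' k * mPoch (B' + (k:ℂ) • 1) n := by
    rw [Nat.add_comm n k]
    exact mPoch_add B' k n
  have hCinv : (mPoch C (m+(n+k)))⁻¹ = (mPoch (C + (k:ℂ) • 1) (m+n))⁻¹ * (mPoch C k)⁻¹ := by
    have h : m+(n+k) = k + (m+n) := by omega
    rw [h, mPoch_add C k (m+n), Matrix.mul_inv_rev]
  have cBC : Commute B' (C + (k:ℂ) • 1) :=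
    hB'C.add_right (Commute.smul_right (Commute.one_right B') _)
  have c1 : Commute (mPoch B' k) (mPoch (C + (k:ℂ) • 1) (m+n)) :=
    commute_mPoch_mPoch cBC k (m+n)
  have hBi : (mPoch (C + (k:ℂ) • 1) (m+n))⁻¹ * mPoch B' k
      = mPoch B' k * (mPoch (C + (k:ℂ) • 1) (m+n))⁻¹ :=
    (commute_nonsing_inv (isUnit_mPoch_shift hC k (m+n)) c1.eq).symm
  have c2 : Commute (mPoch (B' + (k:ℂ) • 1) n) (mPoch B' k) :=
    commute_mPoch_mPoch ((Commute.refl B').add_left (Commute.smul_left (Commute.one_left B') _)) n k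
  have hmat : (mPoch A m * mPoch D' n * mPoch B m * mPoch (B' + (k:ℂ) • 1) n *
        (mPoch (C + (k:ℂ) • 1) (m+n))⁻¹) * mPoch B' k * (mPoch C k)⁻¹
      = mPoch A m * mPoch D' n * mPoch B m * mPoch B' (n+k) * (mPoch C (m+(n+k)))⁻¹ := by
    rw [hB, hCinv]
    simp only [mul_assoc]
    rw [← mul_assoc (mPoch (C + (k:ℂ) • 1) (m+n))⁻¹ (mPoch B' k), hBi, mul_assoc]
    rw [← mul_assoc (mPoch (B' + (k:ℂ) • 1) n) (mPoch B' k), c2.eq, mul_assoc]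
  show (e * dfall (n+k) k * ((m.factorial : ℂ) * ((n+k).factorial : ℂ))⁻¹ * x ^ m * y ^ (n+k)) •
      (mPoch A m * mPoch D' ((n+k) - k) * mPoch B m * mPoch B' (n+k) *
        (mPoch C (m+(n+k)))⁻¹) = _
  rw [term, Matrix.smul_mul, Matrix.smul_mul, smul_smul, Nat.add_sub_cancel]
  rw [scalar_shift2]
  congr 1
  exact hmat.symm

lemma appellF3_eq (A A' B B' C : Mat) (x y : ℂ) :
    appellF3 A A' B B' C x y = ∑' p : ℕ × ℕ, term A A' B B' C x y p := rfl

section Analysis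
variable [Nonempty (Fin r)]

attribute [local instance] Matrix.linftyOpNormedRing Matrix.linftyOpNormedAlgebra


lemma norm_add_smul_le (A : Mat) (j : ℕ) : ‖A + (j : ℂ) • 1‖ ≤ ‖A‖ + (j : ℝ) := by
  calc ‖A + (j:ℂ) • 1‖ ≤ ‖A‖ + ‖(j:ℂ) • (1:Mat)‖ := norm_add_le _ _
    _ = ‖A‖ + (j:ℝ) := by rw [norm_smul, norm_one, mul_one, Complex.norm_natCast]

lemma norm_mPoch_le (A : Mat) (m : ℕ) : ‖mPoch A m‖ ≤ pr (‖A‖ + 1) m := by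
  induction m with
  | zero => simp [mPoch_zero, pr_zero]
  | succ m ih =>
      rw [mPoch_succ, pr_succ]
      calc ‖mPoch A m * (A + (m:ℂ) • 1)‖ ≤ ‖mPoch A m‖ * ‖A + (m:ℂ) • 1‖ := norm_mul_le _ _
        _ ≤ pr (‖A‖ + 1) m * (‖A‖ + 1 + (m:ℝ)) := by
            apply mul_le_mul ih ((norm_add_smul_le A m).trans (by linarith)) (norm_nonneg _)
              (pr_nonneg (by positivity) _)

lemma neumann (C : Mat) {j : ℕ} (h : ‖C‖ < (j : ℝ)) :
    ‖(C + (j : ℂ) • 1)⁻¹‖ ≤ ((j : ℝ) - ‖C‖)⁻¹ := by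
  have hj0 : 0 < (j : ℝ) := lt_of_le_of_lt (norm_nonneg C) h
  have hjC : ((j : ℂ)) ≠ 0 := by
    simp only [ne_eq, Nat.cast_eq_zero]
    exact_mod_cast hj0.ne'
  set t : Mat := -((j : ℂ)⁻¹ • C) with ht_def
  have hnt : ‖t‖ < 1 := by
    rw [ht_def, norm_neg, norm_smul, norm_inv, Complex.norm_natCast]
    rw [inv_mul_lt_iff₀ hj0, mul_one]
    exact h
  set u : Matˣ := Units.oneSub t hnt with hu_def
  have huval : (C + (j : ℂ) • 1) = (j : ℂ) • (u : Mat) := by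
    rw [hu_def, Units.val_oneSub, ht_def, sub_neg_eq_add, smul_add, smul_smul,
      mul_inv_cancel₀ hjC, one_smul]
    abel
  have hinv : (C + (j : ℂ) • 1) * ((j : ℂ)⁻¹ • (↑u⁻¹ : Mat)) = 1 := by
    rw [huval, Matrix.smul_mul, Matrix.mul_smul, smul_smul, mul_inv_cancel₀ hjC, one_smul,
      u.mul_inv]
  rw [Matrix.inv_eq_right_inv hinv]
  have hsum : Summable (fun n : ℕ => ‖t ^ n‖) := by
    apply Summable.of_nonneg_of_le (fun n => norm_nonneg _) (fun n => norm_pow_le _ _)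
    exact summable_geometric_of_lt_one (norm_nonneg t) hnt
  have huinv : (↑u⁻¹ : Mat) = ∑' n : ℕ, t ^ n := rfl
  have hb : ‖(↑u⁻¹ : Mat)‖ ≤ (1 - ‖t‖)⁻¹ := by
    rw [huinv]
    calc ‖∑' n : ℕ, t ^ n‖ ≤ ∑' n : ℕ, ‖t ^ n‖ := norm_tsum_le_tsum_norm hsum
      _ ≤ ∑' n : ℕ, ‖t‖ ^ n := by
          apply Summable.tsum_le_tsum (fun n => norm_pow_le _ _) hsum
          exact summable_geometric_of_lt_one (norm_nonneg t) hnt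
      _ = (1 - ‖t‖)⁻¹ := tsum_geometric_of_lt_one (norm_nonneg t) hnt
  rw [norm_smul, norm_inv, Complex.norm_natCast]
  have hkey : ((j : ℝ))⁻¹ * (1 - ‖t‖)⁻¹ = ((j:ℝ) - ‖C‖)⁻¹ := by
    rw [← mul_inv]
    congr 1
    have : ‖t‖ = ‖C‖ / (j:ℝ) := by
      rw [ht_def, norm_neg, norm_smul, norm_inv, Complex.norm_natCast]
      ring
    rw [this]
    field_simp
  calc ((j:ℝ))⁻¹ * ‖(↑u⁻¹ : Mat)‖ ≤ ((j:ℝ))⁻¹ * (1 - ‖t‖)⁻¹ := by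
        apply mul_le_mul_of_nonneg_left hb (by positivity)
    _ = ((j:ℝ) - ‖C‖)⁻¹ := hkey

noncomputable def jb (C : Mat) (j : ℕ) : ℝ := ‖(C + (j : ℂ) • 1)⁻¹‖

noncomputable def j0 (C : Mat) : ℕ := ⌈‖C‖⌉₊ + 2

noncomputable def KC (C : Mat) : ℝ := 1 + ∑ j ∈ range (j0 C), jb C j

noncomputable def betaC (C : Mat) (j : ℕ) : ℝ :=
  if j < j0 C then KC C else ((j : ℝ) - ‖C‖)⁻¹

noncomputable def Bb (C : Mat) (m : ℕ) : ℝ := ∏ j ∈ range m, betaC C j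

lemma KC_one_le (C : Mat) : 1 ≤ KC C :=
  le_add_of_nonneg_right (Finset.sum_nonneg fun j _ => norm_nonneg _)

lemma j0_cast_le {C : Mat} {j : ℕ} (h : j0 C ≤ j) : ‖C‖ + 1 ≤ (j : ℝ) := by
  have h1 : ((j0 C : ℕ) : ℝ) ≤ (j : ℝ) := Nat.cast_le.mpr h
  have h2 : ‖C‖ ≤ (⌈‖C‖⌉₊ : ℝ) := Nat.le_ceil _
  have h3 : ((j0 C : ℕ) : ℝ) = (⌈‖C‖⌉₊ : ℝ) + 2 := by
    rw [j0]
    push_cast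
    ring
  linarith

lemma betaC_pos (C : Mat) (j : ℕ) : 0 < betaC C j := by
  rw [betaC]
  split_ifs with h
  · linarith [KC_one_le C]
  · have := j0_cast_le (le_of_not_gt h)
    have hn : (0:ℝ) < (j : ℝ) - ‖C‖ := by linarith
    positivity

set_option maxHeartbeats 1000000 in
lemma jb_le_betaC (C : Mat) (j : ℕ) : jb C j ≤ betaC C j := by
  rw [betaC]
  split_ifs with h
  · have h1 : jb C j ≤ ∑ i ∈ range (j0 C), jb C i :=
      Finset.single_le_sum (f := jb C) (fun i _ => norm_nonneg _) (Finset.mem_range.mpr h)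
    rw [KC]
    linarith
  · have := j0_cast_le (le_of_not_gt h)
    exact neumann C (by linarith)

lemma betaC_anti (C : Mat) : Antitone (betaC C) := by
  apply antitone_nat_of_succ_le
  intro j
  rw [betaC, betaC]
  split_ifs with h1 h2 h2
  · exact le_refl _
  · exact absurd ((Nat.lt_succ_self j).trans h1) h2
  · have hj : ‖C‖ + 1 ≤ ((j+1 : ℕ) : ℝ) := j0_cast_le (not_lt.mp h1)
    have h0 : (1:ℝ) ≤ ((j+1 : ℕ):ℝ) - ‖C‖ := by linarith
    calc (((j+1:ℕ):ℝ) - ‖C‖)⁻¹ ≤ 1 := inv_le_one_of_one_le₀ h0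
      _ ≤ KC C := KC_one_le C
  · have hj := j0_cast_le (le_of_not_gt h2)
    have h0 : (0:ℝ) < (j:ℝ) - ‖C‖ := by linarith
    apply inv_anti₀ h0
    push_cast
    linarith

lemma Bb_succ (C : Mat) (m : ℕ) : Bb C (m+1) = Bb C m * betaC C m :=
  Finset.prod_range_succ _ _

lemma Bb_pos (C : Mat) (m : ℕ) : 0 < Bb C m :=
  Finset.prod_pos fun j _ => betaC_pos C j

lemma inv_mPoch_norm_le (C : Mat) (m0 N : ℕ) :
    ‖(mPoch (C + ((m0 : ℕ) : ℂ) • 1) N)⁻¹‖ ≤ ∏ j ∈ range N, betaC C (m0 + j) := by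
  induction N with
  | zero =>
      rw [mPoch_zero, Matrix.inv_eq_left_inv (show (1:Mat) * 1 = 1 by rw [one_mul])]
      simp
  | succ N ih =>
      rw [mPoch_succ, add_smul_add, Matrix.mul_inv_rev, Finset.prod_range_succ]
      calc ‖(C + ((m0 + N : ℕ) : ℂ) • 1)⁻¹ * (mPoch (C + ((m0:ℕ):ℂ) • 1) N)⁻¹‖
          ≤ ‖(C + ((m0 + N : ℕ) : ℂ) • 1)⁻¹‖ * ‖(mPoch (C + ((m0:ℕ):ℂ) • 1) N)⁻¹‖ :=
            norm_mul_le _ _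
        _ ≤ betaC C (m0 + N) * ∏ j ∈ range N, betaC C (m0 + j) := by
            apply mul_le_mul (jb_le_betaC C (m0+N)) ih (norm_nonneg _) (betaC_pos C _).le
        _ = (∏ j ∈ range N, betaC C (m0 + j)) * betaC C (m0 + N) := mul_comm _ _

lemma inv_mPoch_norm_le_Bb (C : Mat) (m0 N : ℕ) :
    ‖(mPoch (C + ((m0 : ℕ) : ℂ) • 1) N)⁻¹‖ ≤ Bb C N := by
  refine (inv_mPoch_norm_le C m0 N).trans ?_
  apply Finset.prod_le_prod (fun j _ => (betaC_pos C _).le)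
  intro j _
  exact betaC_anti C (Nat.le_add_left j m0)

lemma tendsto_ratio (p q : ℝ) :
    Filter.Tendsto (fun m : ℕ => (p + (m:ℝ)) / (q + (m:ℝ))) Filter.atTop (nhds 1) := by
  have h1 : Filter.Tendsto (fun m : ℕ => q + (m:ℝ)) Filter.atTop Filter.atTop :=
    Filter.tendsto_atTop_add_const_left _ q tendsto_natCast_atTop_atTop
  have h2 : Filter.Tendsto (fun m : ℕ => (p - q)/(q + (m:ℝ)) + 1) Filter.atTop (nhds 1) := by
    have := (h1.const_div_atTop (p - q)).add_const 1
    simpa using this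
  apply h2.congr'
  filter_upwards [h1.eventually_gt_atTop 0] with m hm
  field_simp
  ring

lemma tendsto_mul_betaC (C : Mat) (b : ℝ) :
    Filter.Tendsto (fun m : ℕ => (b + (m:ℝ)) * betaC C m) Filter.atTop (nhds 1) := by
  apply (tendsto_ratio b (-‖C‖)).congr'
  filter_upwards [Filter.eventually_ge_atTop (j0 C)] with m hm
  rw [betaC, if_neg (not_lt.mpr hm), div_eq_mul_inv]
  congr 2
  ring

noncomputable def useq (C : Mat) (a b : ℝ) (s : ℕ) (t : ℝ) (m : ℕ) : ℝ :=
  ((m:ℝ)+1)^s * pr a m * pr b m * Bb C m * t^m * ((m.factorial : ℝ))⁻¹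

lemma useq_nonneg (C : Mat) {a b : ℝ} (ha : 1 ≤ a) (hb : 1 ≤ b) (s : ℕ) {t : ℝ}
    (ht0 : 0 ≤ t) (m : ℕ) : 0 ≤ useq C a b s t m := by
  have h1 := pr_nonneg (show (0:ℝ) < a by linarith) m
  have h2 := pr_nonneg (show (0:ℝ) < b by linarith) m
  have h3 := (Bb_pos C m).le
  have h4 : (0:ℝ) ≤ ((m:ℝ)+1)^s := by positivity
  have h5 : (0:ℝ) ≤ t^m := pow_nonneg ht0 m
  have h6 : (0:ℝ) ≤ ((m.factorial:ℝ))⁻¹ := by positivity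
  rw [useq]
  exact mul_nonneg (mul_nonneg (mul_nonneg (mul_nonneg (mul_nonneg h4 h1) h2) h3) h5) h6

lemma useq_succ (C : Mat) (a b : ℝ) (s : ℕ) (t : ℝ) (m : ℕ) :
    useq C a b s t (m+1) = useq C a b s t m *
      (((2+(m:ℝ))/(1+(m:ℝ)))^s * ((a+(m:ℝ))/(1+(m:ℝ))) * ((b+(m:ℝ)) * betaC C m) * t) := by
  have hm1 : (1+(m:ℝ)) ≠ 0 := by positivity
  have hf : ((m.factorial : ℝ)) ≠ 0 := by
    exact_mod_cast (Nat.factorial_pos m).ne'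
  rw [useq, useq, pr_succ, pr_succ, Bb_succ, pow_succ]
  push_cast [Nat.factorial_succ]
  rw [div_pow]
  field_simp
  ring

lemma summable_useq (C : Mat) {a b : ℝ} (ha : 1 ≤ a) (hb : 1 ≤ b) (s : ℕ) {t : ℝ}
    (ht0 : 0 ≤ t) (ht : t < 1) : Summable (useq C a b s t) := by
  set q : ℕ → ℝ := fun m =>
    ((2+(m:ℝ))/(1+(m:ℝ)))^s * ((a+(m:ℝ))/(1+(m:ℝ))) * ((b+(m:ℝ)) * betaC C m) * t with hq_def
  have hq : Filter.Tendsto q Filter.atTop (nhds t) := by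
    have h1 := ((tendsto_ratio 2 1).pow s).mul (tendsto_ratio a 1)
    have h2 := h1.mul (tendsto_mul_betaC C b)
    have h3 := h2.mul_const t
    simpa using h3
  set ρ : ℝ := (1+t)/2 with hρ_def
  have hρ : ρ < 1 := by rw [hρ_def]; linarith
  have htρ : t < ρ := by rw [hρ_def]; linarith
  have hev : ∀ᶠ m in Filter.atTop, q m ≤ ρ := hq.eventually_le_const htρ
  apply summable_of_ratio_norm_eventually_le hρ
  filter_upwards [hev] with m hm
  have h1 : useq C a b s t (m+1) = useq C a b s t m * q m := useq_succ C a b s t m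
  have h2 : 0 ≤ useq C a b s t m := useq_nonneg C ha hb s ht0 m
  rw [Real.norm_of_nonneg (useq_nonneg C ha hb s ht0 (m+1)), Real.norm_of_nonneg h2, h1]
  calc useq C a b s t m * q m ≤ useq C a b s t m * ρ := mul_le_mul_of_nonneg_left hm h2
    _ = ρ * useq C a b s t m := mul_comm _ _

lemma norm_mul5_le (M1 M2 M3 M4 M5 : Mat) :
    ‖M1*M2*M3*M4*M5‖ ≤ ‖M1‖*‖M2‖*‖M3‖*‖M4‖*‖M5‖ :=
  le_trans (norm_mul_le _ _) (mul_le_mul_of_nonneg_right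
    (le_trans (norm_mul_le _ _) (mul_le_mul_of_nonneg_right
      (le_trans (norm_mul_le _ _) (mul_le_mul_of_nonneg_right (norm_mul_le _ _)
        (norm_nonneg _))) (norm_nonneg _))) (norm_nonneg _))

lemma inv_mPoch_norm_le_Bb2 (C : Mat) (m0 m n : ℕ) :
    ‖(mPoch (C + ((m0 : ℕ) : ℂ) • 1) (m+n))⁻¹‖ ≤ Bb C m * Bb C n := by
  refine (inv_mPoch_norm_le C m0 (m+n)).trans ?_
  rw [Finset.prod_range_add]
  apply mul_le_mul ?_ ?_ (Finset.prod_nonneg fun j _ => (betaC_pos C _).le) (Bb_pos C m).le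
  · exact Finset.prod_le_prod (fun j _ => (betaC_pos C _).le)
      (fun j _ => betaC_anti C (Nat.le_add_left j m0))
  · exact Finset.prod_le_prod (fun j _ => (betaC_pos C _).le)
      (fun j _ => betaC_anti C (by omega))

lemma summable_of_bound (C G : Mat) (m0 : ℕ) (hG : G = C + ((m0 : ℕ) : ℂ) • 1)
    {a b a' b' : ℝ} (ha : 1 ≤ a) (hb : 1 ≤ b) (ha' : 1 ≤ a') (hb' : 1 ≤ b')
    (s1 s2 : ℕ) {E : ℝ} (hE : 0 ≤ E) {t1 t2 : ℝ}
    (ht1 : 0 ≤ t1) (h1 : t1 < 1) (ht2 : 0 ≤ t2) (h2 : t2 < 1)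
    (f : ℕ × ℕ → Mat)
    (hf : ∀ p : ℕ × ℕ, ‖f p‖ ≤
      E * ((((p.1:ℝ))+1)^s1 * pr a p.1 * pr b p.1 * t1^p.1 * ((p.1.factorial : ℝ))⁻¹)
        * ((((p.2:ℝ))+1)^s2 * pr a' p.2 * pr b' p.2 * t2^p.2 * ((p.2.factorial : ℝ))⁻¹)
        * ‖(mPoch G (p.1+p.2))⁻¹‖) :
    Summable f := by
  subst hG
  apply Summable.of_norm
  have hmaj : Summable (fun p : ℕ×ℕ => E * (useq C a b s1 t1 p.1 * useq C a' b' s2 t2 p.2)) :=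
    ((summable_useq C ha hb s1 ht1 h1).mul_of_nonneg (summable_useq C ha' hb' s2 ht2 h2)
      (fun m => useq_nonneg C ha hb s1 ht1 m) (fun n => useq_nonneg C ha' hb' s2 ht2 n)).mul_left E
  apply Summable.of_nonneg_of_le (fun p => norm_nonneg _) _ hmaj
  intro p
  refine (hf p).trans ?_
  have hinv := inv_mPoch_norm_le_Bb2 C m0 p.1 p.2
  have hX1 : (0:ℝ) ≤ (((p.1:ℝ))+1)^s1 * pr a p.1 * pr b p.1 * t1^p.1 * ((p.1.factorial : ℝ))⁻¹ := by
    have q1 := pr_nonneg (show (0:ℝ) < a by linarith) p.1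
    have q2 := pr_nonneg (show (0:ℝ) < b by linarith) p.1
    have q3 : (0:ℝ) ≤ t1^p.1 := pow_nonneg ht1 _
    have q4 : (0:ℝ) ≤ (((p.1:ℝ))+1)^s1 := by positivity
    have q5 : (0:ℝ) ≤ ((p.1.factorial : ℝ))⁻¹ := by positivity
    exact mul_nonneg (mul_nonneg (mul_nonneg (mul_nonneg q4 q1) q2) q3) q5
  have hX2 : (0:ℝ) ≤ (((p.2:ℝ))+1)^s2 * pr a' p.2 * pr b' p.2 * t2^p.2 * ((p.2.factorial : ℝ))⁻¹ := by
    have q1 := pr_nonneg (show (0:ℝ) < a' by linarith) p.2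
    have q2 := pr_nonneg (show (0:ℝ) < b' by linarith) p.2
    have q3 : (0:ℝ) ≤ t2^p.2 := pow_nonneg ht2 _
    have q4 : (0:ℝ) ≤ (((p.2:ℝ))+1)^s2 := by positivity
    have q5 : (0:ℝ) ≤ ((p.2.factorial : ℝ))⁻¹ := by positivity
    exact mul_nonneg (mul_nonneg (mul_nonneg (mul_nonneg q4 q1) q2) q3) q5
  calc E * ((((p.1:ℝ))+1)^s1 * pr a p.1 * pr b p.1 * t1^p.1 * ((p.1.factorial : ℝ))⁻¹)
        * ((((p.2:ℝ))+1)^s2 * pr a' p.2 * pr b' p.2 * t2^p.2 * ((p.2.factorial : ℝ))⁻¹)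
        * ‖(mPoch (C + ((m0:ℕ):ℂ) • 1) (p.1+p.2))⁻¹‖
      ≤ E * ((((p.1:ℝ))+1)^s1 * pr a p.1 * pr b p.1 * t1^p.1 * ((p.1.factorial : ℝ))⁻¹)
        * ((((p.2:ℝ))+1)^s2 * pr a' p.2 * pr b' p.2 * t2^p.2 * ((p.2.factorial : ℝ))⁻¹)
        * (Bb C p.1 * Bb C p.2) := by
        apply mul_le_mul_of_nonneg_left hinv
        exact mul_nonneg (mul_nonneg hE hX1) hX2
    _ = E * (useq C a b s1 t1 p.1 * useq C a' b' s2 t2 p.2) := by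
        rw [useq, useq]
        ring

lemma norm_smul_prod_le (c : ℂ) (M1 M2 M3 M4 M5 : Mat) :
    ‖c • (M1*M2*M3*M4*M5)‖ ≤ ‖c‖ * (‖M1‖*‖M2‖*‖M3‖*‖M4‖*‖M5‖) := by
  rw [norm_smul]
  exact mul_le_mul_of_nonneg_left (norm_mul5_le _ _ _ _ _) (norm_nonneg c)

lemma prod_norm_bound (P A' B B' : Mat) (m n : ℕ) (I : Mat) :
    ‖mPoch P m‖*‖mPoch A' n‖*‖mPoch B m‖*‖mPoch B' n‖*‖I‖ ≤
      pr (‖P‖+1) m * pr (‖A'‖+1) n * pr (‖B‖+1) m * pr (‖B'‖+1) n * ‖I‖ := by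
  have q1 : (0:ℝ) ≤ pr (‖P‖+1) m := pr_nonneg (by positivity) _
  have q2 : (0:ℝ) ≤ pr (‖A'‖+1) n := pr_nonneg (by positivity) _
  have q3 : (0:ℝ) ≤ pr (‖B‖+1) m := pr_nonneg (by positivity) _
  apply mul_le_mul_of_nonneg_right _ (norm_nonneg I)
  apply mul_le_mul _ (norm_mPoch_le B' n) (norm_nonneg _) (mul_nonneg (mul_nonneg q1 q2) q3)
  apply mul_le_mul _ (norm_mPoch_le B m) (norm_nonneg _) (mul_nonneg q1 q2)
  exact mul_le_mul (norm_mPoch_le P m) (norm_mPoch_le A' n) (norm_nonneg _) q1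

lemma norm_term_le (P A' B B' G : Mat) (x y : ℂ) (p : ℕ × ℕ) :
    ‖term P A' B B' G x y p‖ ≤
      1 * ((((p.1:ℝ))+1)^0 * pr (‖P‖+1) p.1 * pr (‖B‖+1) p.1 * ‖x‖^p.1 * ((p.1.factorial : ℝ))⁻¹)
        * ((((p.2:ℝ))+1)^0 * pr (‖A'‖+1) p.2 * pr (‖B'‖+1) p.2 * ‖y‖^p.2 * ((p.2.factorial : ℝ))⁻¹)
        * ‖(mPoch G (p.1+p.2))⁻¹‖ := by
  have hs : ‖((p.1.factorial : ℂ) * (p.2.factorial : ℂ))⁻¹ * x ^ p.1 * y ^ p.2‖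
      = ((p.1.factorial:ℝ))⁻¹ * ((p.2.factorial:ℝ))⁻¹ * ‖x‖^p.1 * ‖y‖^p.2 := by
    rw [norm_mul, norm_mul, norm_inv, norm_mul, norm_pow, norm_pow,
      Complex.norm_natCast, Complex.norm_natCast, mul_inv]
  calc ‖term P A' B B' G x y p‖
      ≤ ‖((p.1.factorial : ℂ) * (p.2.factorial : ℂ))⁻¹ * x ^ p.1 * y ^ p.2‖ *
        (‖mPoch P p.1‖*‖mPoch A' p.2‖*‖mPoch B p.1‖*‖mPoch B' p.2‖*‖(mPoch G (p.1+p.2))⁻¹‖) :=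
        norm_smul_prod_le _ _ _ _ _ _
    _ ≤ ‖((p.1.factorial : ℂ) * (p.2.factorial : ℂ))⁻¹ * x ^ p.1 * y ^ p.2‖ *
        (pr (‖P‖+1) p.1 * pr (‖A'‖+1) p.2 * pr (‖B‖+1) p.1 * pr (‖B'‖+1) p.2 *
          ‖(mPoch G (p.1+p.2))⁻¹‖) :=
        mul_le_mul_of_nonneg_left (prod_norm_bound P A' B B' p.1 p.2 _) (norm_nonneg _)
    _ = _ := by
        rw [hs]
        ring

lemma summable_term (C : Mat) (m0 : ℕ) (G : Mat) (hG : G = C + ((m0 : ℕ) : ℂ) • 1)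
    (P A' B B' : Mat) {x y : ℂ} (hx : ‖x‖ < 1) (hy : ‖y‖ < 1) :
    Summable (term P A' B B' G x y) := by
  apply summable_of_bound C G m0 hG
    (a := ‖P‖+1) (b := ‖B‖+1) (a' := ‖A'‖+1) (b' := ‖B'‖+1)
    (by linarith [norm_nonneg P]) (by linarith [norm_nonneg B])
    (by linarith [norm_nonneg A']) (by linarith [norm_nonneg B'])
    0 0 zero_le_one (norm_nonneg x) hx (norm_nonneg y) hy
  exact norm_term_le P A' B B' G x y

lemma mul5_bound {u1 u2 u3 u4 : ℝ} {M1 M2 M3 M4 M5 : Mat}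
    (h1 : ‖M1‖ ≤ u1) (h2 : ‖M2‖ ≤ u2) (h3 : ‖M3‖ ≤ u3) (h4 : ‖M4‖ ≤ u4)
    (q1 : 0 ≤ u1) (q2 : 0 ≤ u2) (q3 : 0 ≤ u3) :
    ‖M1‖*‖M2‖*‖M3‖*‖M4‖*‖M5‖ ≤ u1*u2*u3*u4*‖M5‖ := by
  apply mul_le_mul_of_nonneg_right _ (norm_nonneg M5)
  apply mul_le_mul _ h4 (norm_nonneg _) (mul_nonneg (mul_nonneg q1 q2) q3)
  apply mul_le_mul _ h3 (norm_nonneg _) (mul_nonneg q1 q2)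
  exact mul_le_mul h1 h2 (norm_nonneg _) q1

lemma norm_V1_le (D A' B B' C : Mat) (x y : ℂ) (e : ℂ) {k s : ℕ} (hk : k ≤ s) (p : ℕ × ℕ) :
    ‖V1 D A' B B' C x y e k p‖ ≤
      ‖e‖ * ((((p.1:ℝ))+1)^s * pr (‖D‖+1) p.1 * pr (‖B‖+1) p.1 * ‖x‖^p.1 * ((p.1.factorial : ℝ))⁻¹)
        * ((((p.2:ℝ))+1)^0 * pr (‖A'‖+1) p.2 * pr (‖B'‖+1) p.2 * ‖y‖^p.2 * ((p.2.factorial : ℝ))⁻¹)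
        * ‖(mPoch C (p.1+p.2))⁻¹‖ := by
  have hd1 : ‖mPoch D (p.1 - k)‖ ≤ pr (‖D‖+1) p.1 :=
    (norm_mPoch_le D (p.1 - k)).trans (pr_le_pr (by linarith [norm_nonneg D]) (Nat.sub_le _ _))
  have qd : (0:ℝ) ≤ pr (‖D‖+1) p.1 := pr_nonneg (by positivity) _
  have qa : (0:ℝ) ≤ pr (‖A'‖+1) p.2 := pr_nonneg (by positivity) _
  have qb : (0:ℝ) ≤ pr (‖B‖+1) p.1 := pr_nonneg (by positivity) _
  have hc : ‖e * dfall p.1 k * ((p.1.factorial : ℂ) * (p.2.factorial : ℂ))⁻¹ * x ^ p.1 * y ^ p.2‖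
      = ‖e‖ * ‖dfall p.1 k‖ * (((p.1.factorial:ℝ))⁻¹ * ((p.2.factorial:ℝ))⁻¹) * ‖x‖^p.1 * ‖y‖^p.2 := by
    rw [norm_mul, norm_mul, norm_mul, norm_mul, norm_inv, norm_mul, norm_pow, norm_pow,
      Complex.norm_natCast, Complex.norm_natCast, mul_inv]
  have hdf : ‖dfall p.1 k‖ ≤ (((p.1:ℝ))+1)^s :=
    (dfall_abs p.1 k).trans (pow_le_pow_right₀ (le_add_of_nonneg_left (Nat.cast_nonneg p.1)) hk)
  calc ‖V1 D A' B B' C x y e k p‖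
      ≤ ‖e * dfall p.1 k * ((p.1.factorial : ℂ) * (p.2.factorial : ℂ))⁻¹ * x ^ p.1 * y ^ p.2‖ *
        (pr (‖D‖+1) p.1 * pr (‖A'‖+1) p.2 * pr (‖B‖+1) p.1 * pr (‖B'‖+1) p.2 *
          ‖(mPoch C (p.1+p.2))⁻¹‖) := by
        refine (norm_smul_prod_le _ _ _ _ _ _).trans (mul_le_mul_of_nonneg_left ?_ (norm_nonneg _))
        exact mul5_bound hd1 (norm_mPoch_le A' p.2) (norm_mPoch_le B p.1) (norm_mPoch_le B' p.2)
          qd qa qb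
    _ = (‖e‖ * ‖dfall p.1 k‖ * (((p.1.factorial:ℝ))⁻¹ * ((p.2.factorial:ℝ))⁻¹) * ‖x‖^p.1 * ‖y‖^p.2) *
        (pr (‖D‖+1) p.1 * pr (‖A'‖+1) p.2 * pr (‖B‖+1) p.1 * pr (‖B'‖+1) p.2 *
          ‖(mPoch C (p.1+p.2))⁻¹‖) := by rw [hc]
    _ ≤ (‖e‖ * (((p.1:ℝ))+1)^s * (((p.1.factorial:ℝ))⁻¹ * ((p.2.factorial:ℝ))⁻¹) * ‖x‖^p.1 * ‖y‖^p.2) *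
        (pr (‖D‖+1) p.1 * pr (‖A'‖+1) p.2 * pr (‖B‖+1) p.1 * pr (‖B'‖+1) p.2 *
          ‖(mPoch C (p.1+p.2))⁻¹‖) := by
        apply mul_le_mul_of_nonneg_right _ (by
          apply mul_nonneg (mul_nonneg (mul_nonneg (mul_nonneg qd qa) qb)
            (pr_nonneg (by positivity) _)) (norm_nonneg _))
        have h9 : (0:ℝ) ≤ ((p.1.factorial:ℝ))⁻¹ * ((p.2.factorial:ℝ))⁻¹ := by positivity
        apply mul_le_mul_of_nonneg_right _ (pow_nonneg (norm_nonneg y) _)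
        apply mul_le_mul_of_nonneg_right _ (pow_nonneg (norm_nonneg x) _)
        apply mul_le_mul_of_nonneg_right _ h9
        exact mul_le_mul_of_nonneg_left hdf (norm_nonneg e)
    _ = _ := by ring

lemma summable_V1 (C : Mat) (D A' B B' : Mat) {x y : ℂ} (hx : ‖x‖ < 1) (hy : ‖y‖ < 1)
    (e : ℂ) {k s : ℕ} (hk : k ≤ s) : Summable (V1 D A' B B' C x y e k) := by
  apply summable_of_bound C C 0 (by simp)
    (a := ‖D‖+1) (b := ‖B‖+1) (a' := ‖A'‖+1) (b' := ‖B'‖+1)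
    (by linarith [norm_nonneg D]) (by linarith [norm_nonneg B])
    (by linarith [norm_nonneg A']) (by linarith [norm_nonneg B'])
    s 0 (norm_nonneg e) (norm_nonneg x) hx (norm_nonneg y) hy
  exact norm_V1_le D A' B B' C x y e hk

lemma norm_V2_le (A D' B B' C : Mat) (x y : ℂ) (e : ℂ) {k s : ℕ} (hk : k ≤ s) (p : ℕ × ℕ) :
    ‖V2 A D' B B' C x y e k p‖ ≤
      ‖e‖ * ((((p.1:ℝ))+1)^0 * pr (‖A‖+1) p.1 * pr (‖B‖+1) p.1 * ‖x‖^p.1 * ((p.1.factorial : ℝ))⁻¹)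
        * ((((p.2:ℝ))+1)^s * pr (‖D'‖+1) p.2 * pr (‖B'‖+1) p.2 * ‖y‖^p.2 * ((p.2.factorial : ℝ))⁻¹)
        * ‖(mPoch C (p.1+p.2))⁻¹‖ := by
  have hd1 : ‖mPoch D' (p.2 - k)‖ ≤ pr (‖D'‖+1) p.2 :=
    (norm_mPoch_le D' (p.2 - k)).trans (pr_le_pr (by linarith [norm_nonneg D']) (Nat.sub_le _ _))
  have qd : (0:ℝ) ≤ pr (‖D'‖+1) p.2 := pr_nonneg (by positivity) _
  have qa : (0:ℝ) ≤ pr (‖A‖+1) p.1 := pr_nonneg (by positivity) _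
  have qb : (0:ℝ) ≤ pr (‖B‖+1) p.1 := pr_nonneg (by positivity) _
  have hc : ‖e * dfall p.2 k * ((p.1.factorial : ℂ) * (p.2.factorial : ℂ))⁻¹ * x ^ p.1 * y ^ p.2‖
      = ‖e‖ * ‖dfall p.2 k‖ * (((p.1.factorial:ℝ))⁻¹ * ((p.2.factorial:ℝ))⁻¹) * ‖x‖^p.1 * ‖y‖^p.2 := by
    rw [norm_mul, norm_mul, norm_mul, norm_mul, norm_inv, norm_mul, norm_pow, norm_pow,
      Complex.norm_natCast, Complex.norm_natCast, mul_inv]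
  have hdf : ‖dfall p.2 k‖ ≤ (((p.2:ℝ))+1)^s :=
    (dfall_abs p.2 k).trans (pow_le_pow_right₀ (le_add_of_nonneg_left (Nat.cast_nonneg p.2)) hk)
  calc ‖V2 A D' B B' C x y e k p‖
      ≤ ‖e * dfall p.2 k * ((p.1.factorial : ℂ) * (p.2.factorial : ℂ))⁻¹ * x ^ p.1 * y ^ p.2‖ *
        (pr (‖A‖+1) p.1 * pr (‖D'‖+1) p.2 * pr (‖B‖+1) p.1 * pr (‖B'‖+1) p.2 *
          ‖(mPoch C (p.1+p.2))⁻¹‖) := by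
        refine (norm_smul_prod_le _ _ _ _ _ _).trans (mul_le_mul_of_nonneg_left ?_ (norm_nonneg _))
        exact mul5_bound (norm_mPoch_le A p.1) hd1 (norm_mPoch_le B p.1) (norm_mPoch_le B' p.2)
          qa qd qb
    _ = (‖e‖ * ‖dfall p.2 k‖ * (((p.1.factorial:ℝ))⁻¹ * ((p.2.factorial:ℝ))⁻¹) * ‖x‖^p.1 * ‖y‖^p.2) *
        (pr (‖A‖+1) p.1 * pr (‖D'‖+1) p.2 * pr (‖B‖+1) p.1 * pr (‖B'‖+1) p.2 *
          ‖(mPoch C (p.1+p.2))⁻¹‖) := by rw [hc]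
    _ ≤ (‖e‖ * (((p.2:ℝ))+1)^s * (((p.1.factorial:ℝ))⁻¹ * ((p.2.factorial:ℝ))⁻¹) * ‖x‖^p.1 * ‖y‖^p.2) *
        (pr (‖A‖+1) p.1 * pr (‖D'‖+1) p.2 * pr (‖B‖+1) p.1 * pr (‖B'‖+1) p.2 *
          ‖(mPoch C (p.1+p.2))⁻¹‖) := by
        apply mul_le_mul_of_nonneg_right _ (by
          apply mul_nonneg (mul_nonneg (mul_nonneg (mul_nonneg qa qd) qb)
            (pr_nonneg (by positivity) _)) (norm_nonneg _))
        have h9 : (0:ℝ) ≤ ((p.1.factorial:ℝ))⁻¹ * ((p.2.factorial:ℝ))⁻¹ := by positivity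
        apply mul_le_mul_of_nonneg_right _ (pow_nonneg (norm_nonneg y) _)
        apply mul_le_mul_of_nonneg_right _ (pow_nonneg (norm_nonneg x) _)
        apply mul_le_mul_of_nonneg_right _ h9
        exact mul_le_mul_of_nonneg_left hdf (norm_nonneg e)
    _ = _ := by ring

lemma summable_V2 (C : Mat) (A D' B B' : Mat) {x y : ℂ} (hx : ‖x‖ < 1) (hy : ‖y‖ < 1)
    (e : ℂ) {k s : ℕ} (hk : k ≤ s) : Summable (V2 A D' B B' C x y e k) := by
  apply summable_of_bound C C 0 (by simp)
    (a := ‖A‖+1) (b := ‖B‖+1) (a' := ‖D'‖+1) (b' := ‖B'‖+1)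
    (by linarith [norm_nonneg A]) (by linarith [norm_nonneg B])
    (by linarith [norm_nonneg D']) (by linarith [norm_nonneg B'])
    0 s (norm_nonneg e) (norm_nonneg x) hx (norm_nonneg y) hy
  exact norm_V2_le A D' B B' C x y e hk

lemma smul_mul_tsum (c : ℂ) (L R : Mat) {f : ℕ × ℕ → Mat} (hf : Summable f) :
    ∑' p, c • (L * f p * R) = c • (L * (∑' p, f p) * R) := by
  let lm : Mat →ₗ[ℂ] Mat :=
    { toFun := fun M => c • (L * M * R)
      map_add' := by
        intro a b
        rw [mul_add, add_mul, smul_add]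
      map_smul' := by
        intro t a
        show c • (L * (t • a) * R) = t • (c • (L * a * R))
        rw [Matrix.mul_smul, Matrix.smul_mul, smul_comm] }
  have h := (LinearMap.toContinuousLinearMap lm).map_tsum hf
  exact (h.symm : _)

lemma master1 (P A' B B' C : Mat) {x y : ℂ} (hx : ‖x‖ < 1) (hy : ‖y‖ < 1)
    (D : ℕ → Mat) (e : ℕ → ℂ) (s : ℕ)
    (hDB : ∀ k, k ≤ s → Commute (D k) B) (hA'B : Commute A' B)
    (hcoef : ∀ M, mPoch P M = ∑ k ∈ range (s+1), (e k * dfall M k) • mPoch (D k) (M - k)) :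
    appellF3 P A' B B' C x y = ∑ k ∈ range (s+1), (e k * x^k) •
      (mPoch B k * appellF3 (D k) A' (B + (k:ℂ) • 1) B' (C + (k:ℂ) • 1) x y *
        (mPoch C k)⁻¹) := by
  have h1 : appellF3 P A' B B' C x y
      = ∑' p : ℕ × ℕ, ∑ k ∈ range (s+1), V1 (D k) A' B B' C x y (e k) k p := by
    rw [appellF3_eq]
    exact tsum_congr (term_expand1 P A' B B' C x y D e s hcoef)
  rw [h1, Summable.tsum_finsetSum (fun k hk =>
    summable_V1 C (D k) A' B B' hx hy (e k) (Nat.lt_succ_iff.mp (Finset.mem_range.mp hk)))]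
  apply Finset.sum_congr rfl
  intro k hk
  have hk' : k ≤ s := Nat.lt_succ_iff.mp (Finset.mem_range.mp hk)
  have hinj : Function.Injective (fun p : ℕ × ℕ => (p.1 + k, p.2)) := by
    intro a b hab
    simp only [Prod.mk.injEq] at hab
    exact Prod.ext (by omega) hab.2
  have hsupp : Function.support (V1 (D k) A' B B' C x y (e k) k) ⊆
      Set.range (fun p : ℕ × ℕ => (p.1 + k, p.2)) := by
    intro p hp
    rcases le_or_gt k p.1 with h | h
    · exact ⟨(p.1 - k, p.2), Prod.ext (Nat.sub_add_cancel h) rfl⟩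
    · exact absurd (V1_zero (D k) A' B B' C x y (e k) k p h) hp
  rw [← Function.Injective.tsum_eq hinj hsupp]
  have hterm : ∀ p : ℕ × ℕ, V1 (D k) A' B B' C x y (e k) k (p.1 + k, p.2)
      = (e k * x^k) • (mPoch B k *
          term (D k) A' (B + (k:ℂ) • 1) B' (C + (k:ℂ) • 1) x y p * (mPoch C k)⁻¹) :=
    fun p => V1_shift (D k) A' B B' C x y (e k) k (hDB k hk') hA'B p.1 p.2
  calc ∑' p : ℕ × ℕ, V1 (D k) A' B B' C x y (e k) k (p.1 + k, p.2)
      = ∑' p : ℕ × ℕ, (e k * x^k) • (mPoch B k *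
          term (D k) A' (B + (k:ℂ) • 1) B' (C + (k:ℂ) • 1) x y p * (mPoch C k)⁻¹) :=
        tsum_congr hterm
    _ = (e k * x^k) • (mPoch B k *
          (∑' p : ℕ × ℕ, term (D k) A' (B + (k:ℂ) • 1) B' (C + (k:ℂ) • 1) x y p) *
          (mPoch C k)⁻¹) :=
        smul_mul_tsum _ _ _ (summable_term C k _ rfl (D k) A' (B + (k:ℂ) • 1) B' hx hy)
    _ = (e k * x^k) • (mPoch B k *
          appellF3 (D k) A' (B + (k:ℂ) • 1) B' (C + (k:ℂ) • 1) x y * (mPoch C k)⁻¹) := by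
        rw [appellF3_eq]

lemma tsum_mul_smul (c : ℂ) (R1 R2 : Mat) {f : ℕ × ℕ → Mat} (hf : Summable f) :
    ∑' p, c • (f p * R1 * R2) = c • ((∑' p, f p) * R1 * R2) := by
  let lm : Mat →ₗ[ℂ] Mat :=
    { toFun := fun M => c • (M * R1 * R2)
      map_add' := by
        intro a b
        rw [add_mul, add_mul, smul_add]
      map_smul' := by
        intro t a
        show c • ((t • a) * R1 * R2) = t • (c • (a * R1 * R2))
        rw [Matrix.smul_mul, Matrix.smul_mul, smul_comm] }
  have h := (LinearMap.toContinuousLinearMap lm).map_tsum hf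
  exact (h.symm : _)

lemma master2 (A P' B B' C : Mat) {x y : ℂ} (hx : ‖x‖ < 1) (hy : ‖y‖ < 1)
    (hC : ∀ n : ℕ, IsUnit (C + (n : ℂ) • 1))
    (D' : ℕ → Mat) (e : ℕ → ℂ) (s : ℕ)
    (hB'C : Commute B' C)
    (hcoef : ∀ M, mPoch P' M = ∑ k ∈ range (s+1), (e k * dfall M k) • mPoch (D' k) (M - k)) :
    appellF3 A P' B B' C x y = ∑ k ∈ range (s+1), (e k * y^k) •
      (appellF3 A (D' k) B (B' + (k:ℂ) • 1) (C + (k:ℂ) • 1) x y * mPoch B' k *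
        (mPoch C k)⁻¹) := by
  have h1 : appellF3 A P' B B' C x y
      = ∑' p : ℕ × ℕ, ∑ k ∈ range (s+1), V2 A (D' k) B B' C x y (e k) k p := by
    rw [appellF3_eq]
    exact tsum_congr (term_expand2 A P' B B' C x y D' e s hcoef)
  rw [h1, Summable.tsum_finsetSum (fun k hk =>
    summable_V2 C A (D' k) B B' hx hy (e k) (Nat.lt_succ_iff.mp (Finset.mem_range.mp hk)))]
  apply Finset.sum_congr rfl
  intro k hk
  have hinj : Function.Injective (fun p : ℕ × ℕ => (p.1, p.2 + k)) := by
    intro a b hab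
    simp only [Prod.mk.injEq] at hab
    exact Prod.ext hab.1 (by omega)
  have hsupp : Function.support (V2 A (D' k) B B' C x y (e k) k) ⊆
      Set.range (fun p : ℕ × ℕ => (p.1, p.2 + k)) := by
    intro p hp
    rcases le_or_gt k p.2 with h | h
    · exact ⟨(p.1, p.2 - k), Prod.ext rfl (Nat.sub_add_cancel h)⟩
    · exact absurd (V2_zero A (D' k) B B' C x y (e k) k p h) hp
  rw [← Function.Injective.tsum_eq hinj hsupp]
  have hterm : ∀ p : ℕ × ℕ, V2 A (D' k) B B' C x y (e k) k (p.1, p.2 + k)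
      = (e k * y^k) • (term A (D' k) B (B' + (k:ℂ) • 1) (C + (k:ℂ) • 1) x y p *
          mPoch B' k * (mPoch C k)⁻¹) :=
    fun p => V2_shift hC A (D' k) B B' x y (e k) k hB'C p.1 p.2
  calc ∑' p : ℕ × ℕ, V2 A (D' k) B B' C x y (e k) k (p.1, p.2 + k)
      = ∑' p : ℕ × ℕ, (e k * y^k) • (term A (D' k) B (B' + (k:ℂ) • 1) (C + (k:ℂ) • 1) x y p *
          mPoch B' k * (mPoch C k)⁻¹) := tsum_congr hterm
    _ = (e k * y^k) • ((∑' p : ℕ × ℕ, term A (D' k) B (B' + (k:ℂ) • 1) (C + (k:ℂ) • 1) x y p) *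
          mPoch B' k * (mPoch C k)⁻¹) :=
        tsum_mul_smul _ _ _ (summable_term C k _ rfl A (D' k) B (B' + (k:ℂ) • 1) hx hy)
    _ = (e k * y^k) • (appellF3 A (D' k) B (B' + (k:ℂ) • 1) (C + (k:ℂ) • 1) x y *
          mPoch B' k * (mPoch C k)⁻¹) := by
        rw [appellF3_eq]

end Analysis

end AF3

theorem appellF3_recursion_A_binom {r : ℕ} (A A' B B' C : Matrix (Fin r) (Fin r) ℂ) (x y : ℂ)
    (s : ℕ)
    (hC : ∀ n : ℕ, IsUnit (C + (n : ℂ) • (1 : Matrix (Fin r) (Fin r) ℂ)))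
    (hAA' : A * A' = A' * A) (hAB : A * B = B * A) (hA'B : A' * B = B * A')
    (hB'C : B' * C = C * B')
    (hx : ‖x‖ < 1) (hy : ‖y‖ < 1) :
    ((∀ k : ℕ, IsUnit (A + (k : ℂ) • (1 : Matrix (Fin r) (Fin r) ℂ))) →
      appellF3 (A + (s : ℂ) • 1) A' B B' C x y =
        ∑ k ∈ Finset.range (s + 1),
          ((s.choose k : ℂ) * x ^ k) •
            (mPoch B k *
              appellF3 (A + (k : ℂ) • 1) A' (B + (k : ℂ) • 1) B' (C + (k : ℂ) • 1) x y *
              (mPoch C k)⁻¹)) ∧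
    ((∀ k : ℕ, IsUnit (A' + (k : ℂ) • (1 : Matrix (Fin r) (Fin r) ℂ))) →
      appellF3 A (A' + (s : ℂ) • 1) B B' C x y =
        ∑ k ∈ Finset.range (s + 1),
          ((s.choose k : ℂ) * y ^ k) •
            (appellF3 A (A' + (k : ℂ) • 1) B (B' + (k : ℂ) • 1) (C + (k : ℂ) • 1) x y *
              mPoch B' k * (mPoch C k)⁻¹)) ∧
    ((∀ k : ℕ, 1 ≤ k → k ≤ s → IsUnit (A - (k : ℂ) • (1 : Matrix (Fin r) (Fin r) ℂ))) →
      appellF3 (A - (s : ℂ) • 1) A' B B' C x y =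
        ∑ k ∈ Finset.range (s + 1),
          ((s.choose k : ℂ) * (-x) ^ k) •
            (mPoch B k *
              appellF3 A A' (B + (k : ℂ) • 1) B' (C + (k : ℂ) • 1) x y *
              (mPoch C k)⁻¹)) ∧
    ((∀ k : ℕ, 1 ≤ k → k ≤ s → IsUnit (A' - (k : ℂ) • (1 : Matrix (Fin r) (Fin r) ℂ))) →
      appellF3 A (A' - (s : ℂ) • 1) B B' C x y =
        ∑ k ∈ Finset.range (s + 1),
          ((s.choose k : ℂ) * (-y) ^ k) •
            (appellF3 A A' B (B' + (k : ℂ) • 1) (C + (k : ℂ) • 1) x y *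
              mPoch B' k * (mPoch C k)⁻¹)) := by
  rcases Nat.eq_zero_or_pos r with rfl | hr
  · haveI : Subsingleton (Matrix (Fin 0) (Fin 0) ℂ) :=
      ⟨fun a b => by ext i j; exact i.elim0⟩
    exact ⟨fun _ => Subsingleton.elim _ _, fun _ => Subsingleton.elim _ _,
      fun _ => Subsingleton.elim _ _, fun _ => Subsingleton.elim _ _⟩
  · haveI : Nonempty (Fin r) := Fin.pos_iff_nonempty.mp hr
    have hx' : ‖x‖ < 1 := hx
    have hy' : ‖y‖ < 1 := hy
    have hABc : Commute A B := hAB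
    have hA'Bc : Commute A' B := hA'B
    have hB'Cc : Commute B' C := hB'C
    refine ⟨fun _ => ?_, fun _ => ?_, fun _ => ?_, fun _ => ?_⟩
    · exact AF3.master1 (A + (s:ℂ) • 1) A' B B' C hx' hy'
        (fun k => A + (k:ℂ) • 1) (fun k => (s.choose k : ℂ)) s
        (fun k _ => hABc.add_left (Commute.smul_left (Commute.one_left B) _))
        hA'Bc (AF3.coeff_plus s A)
    · exact AF3.master2 A (A' + (s:ℂ) • 1) B B' C hx' hy' hC
        (fun k => A' + (k:ℂ) • 1) (fun k => (s.choose k : ℂ)) s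
        hB'Cc (AF3.coeff_plus s A')
    · have h := AF3.master1 (A - (s:ℂ) • 1) A' B B' C hx' hy'
        (fun _ => A) (fun k => (s.choose k : ℂ) * (-1)^k) s
        (fun k _ => hABc) hA'Bc (AF3.coeff_minus s A)
      rw [h]
      apply Finset.sum_congr rfl
      intro k _
      congr 1
      rw [neg_pow]
      ring
    · have h := AF3.master2 A (A' - (s:ℂ) • 1) B B' C hx' hy' hC
        (fun _ => A') (fun k => (s.choose k : ℂ) * (-1)^k) s
        hB'Cc (AF3.coeff_minus s A')
      rw [h]
      apply Finset.sum_congr rfl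
      intro k _
      congr 1
      rw [neg_pow]
      ring
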